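/- Let G be a weighted connected graph with a cut vertex v, such that deleting v leaves components with vertex sets V₁,...,V_k, and let G_i be the subgraph induced on V_i ∪ {v}. Then the weighted vertex spanning-tree polynomial of G factorizes: P_{G,w} = x_v^{k−1} · Π_{i=1}^k P_{G_i,w}, where each P_{G_i,w} uses the variables of the vertices of G_i. -/

import Mathlib

open scoped Classical in
/-- The weighted vertex spanning-tree polynomial
`P_{G,w} = Σ_{T spanning tree of G} (Π_{e∈T} w(e)) · Π_v x_v^{deg_T(v)−1}`. -/
noncomputable def treePoly {V : Type*} [Fintype V] [DecidableEq V]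
    (G : SimpleGraph V) (w : Sym2 V → ℝ) : MvPolynomial V ℝ :=
  ∑ T ∈ Finset.univ.filter (fun T : SimpleGraph V => T ≤ G ∧ T.IsTree),
    MvPolynomial.C (∏ e ∈ T.edgeFinset, w e) *
      ∏ v, MvPolynomial.X v ^ (T.degree v - 1)

namespace CutAux
open SimpleGraph

variable {V : Type*} {k : ℕ} {v : V} {Vs : Fin k → Set V}

/-- Edges respect the parts. -/
def PartEdges (v : V) (Vs : Fin k → Set V) (H : SimpleGraph V) : Prop :=
  ∀ ⦃a b : V⦄, H.Adj a b → ∀ j, a ∈ Vs j → b ∈ Vs j ∪ {v}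

lemma PartEdges.mono {H H' : SimpleGraph V} (h : H' ≤ H) (hH : PartEdges v Vs H) :
    PartEdges v Vs H' := fun _ _ hab j ha => hH (h hab) j ha

lemma v_not_mem (hcover : (⋃ i, Vs i) = {v}ᶜ) (i : Fin k) : v ∉ Vs i := fun h => by
  have : v ∈ (⋃ i, Vs i) := Set.mem_iUnion.2 ⟨i, h⟩
  rw [hcover] at this; exact this rfl

lemma mem_part (hcover : (⋃ i, Vs i) = {v}ᶜ) {a : V} (ha : a ≠ v) : ∃ i, a ∈ Vs i := by
  have : a ∈ (⋃ i, Vs i) := by rw [hcover]; exact ha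
  exact Set.mem_iUnion.1 this

lemma part_unique (hdisj : ∀ i j, i ≠ j → Disjoint (Vs i) (Vs j)) {a : V} {i j : Fin k}
    (hi : a ∈ Vs i) (hj : a ∈ Vs j) : i = j := by
  by_contra h
  exact (hdisj i j h).ne_of_mem hi hj rfl

lemma partEdges_of_le {G H : SimpleGraph V}
    (hcover : (⋃ i, Vs i) = {v}ᶜ)
    (hsep : ∀ i j, i ≠ j → ∀ a ∈ Vs i, ∀ b ∈ Vs j, ¬ G.Adj a b)
    (hle : H ≤ G) : PartEdges v Vs H := by
  intro a b hab j ha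
  rcases eq_or_ne b v with rfl | hb
  · exact Set.mem_union_right _ rfl
  · obtain ⟨j', hb'⟩ := mem_part hcover hb
    rcases eq_or_ne j j' with rfl | hne
    · exact Set.mem_union_left _ hb'
    · exact absurd (hle hab) (hsep j j' hne a ha b hb')

/-- Gluing a family of graphs on the parts `Vs i ∪ {v}` into a graph on `V`. -/
def glue (v : V) (Vs : Fin k → Set V) (g : ∀ i, SimpleGraph ↥(Vs i ∪ {v})) :
    SimpleGraph V where
  Adj a b := ∃ (i : Fin k) (ha : a ∈ Vs i ∪ {v}) (hb : b ∈ Vs i ∪ {v}), (g i).Adj ⟨a, ha⟩ ⟨b, hb⟩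
  symm := by constructor; rintro a b ⟨i, ha, hb, h⟩; exact ⟨i, hb, ha, h.symm⟩
  loopless := by constructor; rintro a ⟨i, ha, hb, h⟩; exact (g i).ne_of_adj h rfl

lemma glue_adj {g : ∀ i, SimpleGraph ↥(Vs i ∪ {v})} {a b : V} :
    (glue v Vs g).Adj a b ↔
      ∃ (i : Fin k) (ha : a ∈ Vs i ∪ {v}) (hb : b ∈ Vs i ∪ {v}),
        (g i).Adj ⟨a, ha⟩ ⟨b, hb⟩ := Iff.rfl

/-- membership in `Vs i ∪ {v}` and `Vs j ∪ {v}` for `i ≠ j` forces `= v`. -/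
lemma eq_v_of_mem_two (hdisj : ∀ i j, i ≠ j → Disjoint (Vs i) (Vs j)) {a : V} {i j : Fin k}
    (hne : i ≠ j) (hi : a ∈ Vs i ∪ {v}) (hj : a ∈ Vs j ∪ {v}) : a = v := by
  rcases hi with hi | hi
  · rcases hj with hj | hj
    · exact absurd (part_unique hdisj hi hj) hne
    · exact hj
  · exact hi

lemma glue_adj_of_mem (hdisj : ∀ i j, i ≠ j → Disjoint (Vs i) (Vs j))
    {g : ∀ i, SimpleGraph ↥(Vs i ∪ {v})} {i : Fin k} {a b : V}
    (ha : a ∈ Vs i ∪ {v}) (hb : b ∈ Vs i ∪ {v}) (h : (glue v Vs g).Adj a b) :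
    (g i).Adj ⟨a, ha⟩ ⟨b, hb⟩ := by
  obtain ⟨j, ha', hb', h⟩ := h
  rcases eq_or_ne j i with rfl | hne
  · convert h
  · have hav : a = v := eq_v_of_mem_two hdisj hne ha' ha
    have hbv : b = v := eq_v_of_mem_two hdisj hne hb' hb
    exact absurd (Subtype.ext (hav.trans hbv.symm)) ((g j).ne_of_adj h)

lemma walk_stays (hdisj : ∀ i j, i ≠ j → Disjoint (Vs i) (Vs j))
    {H : SimpleGraph V} (hp : PartEdges v Vs H) {c b : V} (q : H.Walk c b)
    (hv : v ∉ q.support) {j : Fin k} (hc : c ∈ Vs j) : b ∈ Vs j := by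
  induction q with
  | nil => exact hc
  | @cons x y z h q ih =>
    have hvq : v ∉ q.support := fun hm => hv (by simp [SimpleGraph.Walk.support_cons, hm])
    have hy : y ∈ Vs j ∪ {v} := hp h j hc
    rcases hy with hy | hy
    · exact ih hvq hy
    · exact absurd (hy ▸ q.start_mem_support) hvq

/-- Projection of reachability to a part. -/
lemma proj_reachable [DecidableEq V] (hdisj : ∀ i j, i ≠ j → Disjoint (Vs i) (Vs j))
    (hcover : (⋃ i, Vs i) = {v}ᶜ)
    {H : SimpleGraph V} (hp : PartEdges v Vs H) {i : Fin k} :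
    ∀ (n : ℕ) (a b : V) (p : H.Walk a b), p.length ≤ n →
      ∀ (ha : a ∈ Vs i ∪ {v}) (hb : b ∈ Vs i ∪ {v}),
      (H.induce (Vs i ∪ {v})).Reachable ⟨a, ha⟩ ⟨b, hb⟩ := by
  intro n
  induction n with
  | zero =>
    intro a b p hlen ha hb
    have hab : a = b := by
      cases p with
      | nil => rfl
      | cons h q => simp at hlen
    subst hab
    exact Reachable.refl _
  | succ n ih =>
    intro a b p hlen ha hb
    cases p with
    | nil => exact Reachable.refl _
    | @cons _ c _ h q =>
      have hlen' : q.length ≤ n := by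
        simpa using Nat.le_of_succ_le_succ (by simpa using hlen)
      rcases ha with ha | hav
      · have hc : c ∈ Vs i ∪ {v} := hp h i ha
        have adj : (H.induce (Vs i ∪ {v})).Adj ⟨a, Or.inl ha⟩ ⟨c, hc⟩ := h
        exact adj.reachable.trans (ih c b q hlen' hc hb)
      · have hav : a = v := hav
        subst hav
        by_cases hc : c ∈ Vs i ∪ {a}
        · have adj : (H.induce (Vs i ∪ {a})).Adj ⟨a, Or.inr rfl⟩ ⟨c, hc⟩ := h
          exact adj.reachable.trans (ih c b q hlen' hc hb)
        · have hcv : c ≠ a := fun e => hc (e ▸ Or.inr rfl)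
          obtain ⟨j, hcj⟩ := mem_part hcover hcv
          have hvq : a ∈ q.support := by
            by_contra hvq
            have hbj : b ∈ Vs j := walk_stays hdisj hp q hvq hcj
            rcases hb with hb | hb
            · exact hc (Or.inl (part_unique hdisj hbj hb ▸ hcj))
            · exact v_not_mem hcover j (hb ▸ hbj)
          exact ih a b (q.dropUntil a hvq)
            (le_trans (SimpleGraph.Walk.length_dropUntil_le q hvq) hlen') (Or.inr rfl) hb

section
variable [DecidableEq V]

lemma glue_partEdges (hdisj : ∀ i j, i ≠ j → Disjoint (Vs i) (Vs j))
    (hcover : (⋃ i, Vs i) = {v}ᶜ) (g : ∀ i, SimpleGraph ↥(Vs i ∪ {v})) :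
    PartEdges v Vs (glue v Vs g) := by
  rintro a b ⟨i, ha, hb, h⟩ j haj
  have hav : a ≠ v := fun e => v_not_mem hcover j (e ▸ haj)
  have hai : a ∈ Vs i := ha.resolve_right hav
  rwa [part_unique hdisj hai haj] at hb

lemma glue_le {G : SimpleGraph V} {g : ∀ i, SimpleGraph ↥(Vs i ∪ {v})}
    (hle : ∀ i, g i ≤ G.induce (Vs i ∪ {v})) : glue v Vs g ≤ G := by
  rintro a b ⟨i, ha, hb, h⟩
  exact hle i h

/-- the natural hom from a part graph into the glued graph. -/
lemma glue_hom_adj {g : ∀ i, SimpleGraph ↥(Vs i ∪ {v})} {i : Fin k}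
    {x y : ↥(Vs i ∪ {v})} (h : (g i).Adj x y) : (glue v Vs g).Adj x.val y.val :=
  ⟨i, x.2, y.2, by simpa using h⟩

lemma glue_connected (hdisj : ∀ i j, i ≠ j → Disjoint (Vs i) (Vs j))
    (hcover : (⋃ i, Vs i) = {v}ᶜ) {g : ∀ i, SimpleGraph ↥(Vs i ∪ {v})}
    (hc : ∀ i, (g i).Connected) : (glue v Vs g).Connected := by
  have hreach : ∀ a : V, (glue v Vs g).Reachable a v := by
    intro a
    rcases eq_or_ne a v with rfl | hav
    · exact Reachable.refl _
    · obtain ⟨i, hai⟩ := mem_part hcover hav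
      have := (hc i).preconnected ⟨a, Or.inl hai⟩ ⟨v, Or.inr rfl⟩
      exact this.map ⟨Subtype.val, fun h => glue_hom_adj h⟩
  haveI : Nonempty V := ⟨v⟩
  rw [SimpleGraph.connected_iff]
  exact ⟨fun a b => (hreach a).trans (hreach b).symm, ⟨v⟩⟩

lemma glue_acyclic (hdisj : ∀ i j, i ≠ j → Disjoint (Vs i) (Vs j))
    (hcover : (⋃ i, Vs i) = {v}ᶜ) {g : ∀ i, SimpleGraph ↥(Vs i ∪ {v})}
    (hac : ∀ i, (g i).IsAcyclic) : (glue v Vs g).IsAcyclic := by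
  rw [SimpleGraph.isAcyclic_iff_forall_adj_isBridge]
  rintro a b hab
  obtain ⟨i, ha, hb, hgi⟩ := hab
  rw [SimpleGraph.isBridge_iff]
  intro hre
  obtain ⟨p⟩ := hre
  set H : SimpleGraph V := glue v Vs g \ SimpleGraph.fromEdgeSet {s(a, b)} with hH
  have hHle : H ≤ glue v Vs g := sdiff_le
  have hp : PartEdges v Vs H := (glue_partEdges hdisj hcover g).mono hHle
  have hre' : (H.induce (Vs i ∪ {v})).Reachable ⟨a, ha⟩ ⟨b, hb⟩ :=
    proj_reachable hdisj hcover hp p.length a b p le_rfl ha hb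
  have hle2 : H.induce (Vs i ∪ {v}) ≤ g i \ SimpleGraph.fromEdgeSet {s(⟨a, ha⟩, ⟨b, hb⟩)} := by
    rintro ⟨x, hx⟩ ⟨y, hy⟩ hxy
    obtain ⟨hxy1, hxy2⟩ := hxy
    refine ⟨glue_adj_of_mem hdisj hx hy hxy1, ?_⟩
    simp only [SimpleGraph.fromEdgeSet_adj, Set.mem_singleton_iff, not_and, not_not] at hxy2 ⊢
    intro he
    have he' : s(x, y) = s(a, b) := by
      have := congrArg (Sym2.map Subtype.val) he
      simpa using this
    exact Subtype.ext (hxy2 he')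
  have hbr : (g i).IsBridge s(⟨a, ha⟩, ⟨b, hb⟩) :=
    SimpleGraph.isAcyclic_iff_forall_adj_isBridge.1 (hac i) hgi
  exact (SimpleGraph.isBridge_iff.1 hbr) (hre'.mono hle2)

lemma induce_connected (hdisj : ∀ i j, i ≠ j → Disjoint (Vs i) (Vs j))
    (hcover : (⋃ i, Vs i) = {v}ᶜ) {H : SimpleGraph V} (hp : PartEdges v Vs H)
    (hc : H.Connected) (i : Fin k) : (H.induce (Vs i ∪ {v})).Connected := by
  rw [SimpleGraph.connected_iff]
  refine ⟨fun x y => ?_, ⟨⟨v, Or.inr rfl⟩⟩⟩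
  obtain ⟨x, hx⟩ := x
  obtain ⟨y, hy⟩ := y
  obtain ⟨p⟩ := hc.preconnected x y
  exact proj_reachable hdisj hcover hp p.length x y p le_rfl hx hy

lemma induce_acyclic {H : SimpleGraph V} (hac : H.IsAcyclic) (S : Set V) :
    (H.induce S).IsAcyclic := by
  intro x c hc
  exact hac (c.map (⟨Subtype.val, fun h => h⟩ : H.induce S →g H))
    (hc.map Subtype.val_injective)

lemma glue_induce (hdisj : ∀ i j, i ≠ j → Disjoint (Vs i) (Vs j))
    (g : ∀ i, SimpleGraph ↥(Vs i ∪ {v})) (i : Fin k) :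
    (glue v Vs g).induce (Vs i ∪ {v}) = g i := by
  ext ⟨x, hx⟩ ⟨y, hy⟩
  constructor
  · intro h
    exact glue_adj_of_mem hdisj hx hy h
  · intro h
    exact glue_hom_adj (x := ⟨x, hx⟩) (y := ⟨y, hy⟩) h

lemma induce_glue (hcover : (⋃ i, Vs i) = {v}ᶜ) {H : SimpleGraph V}
    (hp : PartEdges v Vs H) :
    glue v Vs (fun i => H.induce (Vs i ∪ {v})) = H := by
  ext a b
  constructor
  · rintro ⟨i, ha, hb, h⟩
    exact h
  · intro h
    rcases eq_or_ne a v with rfl | hav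
    · have hbv : b ≠ a := (H.ne_of_adj h).symm
      obtain ⟨j, hbj⟩ := mem_part hcover hbv
      exact ⟨j, Or.inr rfl, Or.inl hbj, h⟩
    · obtain ⟨j, haj⟩ := mem_part hcover hav
      exact ⟨j, Or.inl haj, hp h j haj, h⟩

open scoped Classical in
lemma mem_image_edges [Fintype V] {g : ∀ i, SimpleGraph ↥(Vs i ∪ {v})} {i : Fin k}
    {e : Sym2 V} (he : e ∈ (g i).edgeFinset.image (Sym2.map Subtype.val)) :
    ∃ x y : ↥(Vs i ∪ {v}), (g i).Adj x y ∧ e = s(x.val, y.val) := by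
  obtain ⟨e', he', rfl⟩ := Finset.mem_image.1 he
  induction e' using Sym2.ind with
  | _ x y =>
    rw [SimpleGraph.mem_edgeFinset, SimpleGraph.mem_edgeSet] at he'
    exact ⟨x, y, he', rfl⟩

open scoped Classical in
lemma glue_edgeFinset [Fintype V] (hdisj : ∀ i j, i ≠ j → Disjoint (Vs i) (Vs j))
    (g : ∀ i, SimpleGraph ↥(Vs i ∪ {v})) :
    (glue v Vs g).edgeFinset =
      Finset.univ.biUnion (fun i => (g i).edgeFinset.image (Sym2.map Subtype.val)) := by
  ext e
  induction e using Sym2.ind with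
  | _ a b =>
    simp only [SimpleGraph.mem_edgeFinset, SimpleGraph.mem_edgeSet, Finset.mem_biUnion,
      Finset.mem_univ, true_and]
    constructor
    · rintro ⟨i, ha, hb, h⟩
      refine ⟨i, Finset.mem_image.2 ⟨s(⟨a, ha⟩, ⟨b, hb⟩), ?_, rfl⟩⟩
      rwa [SimpleGraph.mem_edgeFinset, SimpleGraph.mem_edgeSet]
    · rintro ⟨i, he⟩
      obtain ⟨x, y, hxy, he⟩ := mem_image_edges he
      rw [Sym2.eq_iff] at he
      rcases he with ⟨rfl, rfl⟩ | ⟨rfl, rfl⟩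
      · exact glue_hom_adj hxy
      · exact glue_hom_adj hxy.symm

open scoped Classical in
lemma glue_edge_disjoint [Fintype V] (hdisj : ∀ i j, i ≠ j → Disjoint (Vs i) (Vs j))
    (g : ∀ i, SimpleGraph ↥(Vs i ∪ {v})) :
    ∀ i ∈ (Finset.univ : Finset (Fin k)), ∀ j ∈ Finset.univ, i ≠ j →
      Disjoint ((g i).edgeFinset.image (Sym2.map Subtype.val))
        ((g j).edgeFinset.image (Sym2.map Subtype.val)) := by
  intro i _ j _ hij
  rw [Finset.disjoint_left]
  intro e hei hej
  obtain ⟨x, y, hxy, rfl⟩ := mem_image_edges hei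
  obtain ⟨x', y', hxy', he⟩ := mem_image_edges hej
  rw [Sym2.eq_iff] at he
  have hx : x.val = v := by
    rcases he with ⟨hx, hy⟩ | ⟨hx, hy⟩
    · exact eq_v_of_mem_two hdisj hij x.2 (hx ▸ x'.2)
    · exact eq_v_of_mem_two hdisj hij x.2 (hx ▸ y'.2)
  have hy : y.val = v := by
    rcases he with ⟨hx', hy'⟩ | ⟨hx', hy'⟩
    · exact eq_v_of_mem_two hdisj hij y.2 (hy' ▸ y'.2)
    · exact eq_v_of_mem_two hdisj hij y.2 (hy' ▸ x'.2)
  exact (g i).ne_of_adj hxy (Subtype.ext (hx.trans hy.symm))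

open scoped Classical in
lemma glue_degree_of_mem [Fintype V] [DecidableEq V]
    (hdisj : ∀ i j, i ≠ j → Disjoint (Vs i) (Vs j)) (hcover : (⋃ i, Vs i) = {v}ᶜ)
    {g : ∀ i, SimpleGraph ↥(Vs i ∪ {v})} {i : Fin k} {x : V} (hx : x ∈ Vs i) :
    (glue v Vs g).degree x = (g i).degree ⟨x, Or.inl hx⟩ := by
  have hnb : (glue v Vs g).neighborFinset x =
      ((g i).neighborFinset ⟨x, Or.inl hx⟩).image Subtype.val := by
    ext b
    simp only [SimpleGraph.mem_neighborFinset, Finset.mem_image]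
    constructor
    · rintro h
      obtain ⟨j, hxj, hbj, hadj⟩ := h
      have hxv : x ≠ v := fun e => v_not_mem hcover i (e ▸ hx)
      have hxj' : x ∈ Vs j := hxj.resolve_right hxv
      have : j = i := part_unique hdisj hxj' hx
      subst this
      exact ⟨⟨b, hbj⟩, by convert hadj, rfl⟩
    · rintro ⟨b', hb', rfl⟩
      exact glue_hom_adj (x := ⟨x, Or.inl hx⟩) hb'
  rw [SimpleGraph.degree, SimpleGraph.degree, hnb,
    Finset.card_image_of_injective _ Subtype.val_injective]

open scoped Classical in
lemma glue_degree_v [Fintype V] [DecidableEq V]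
    (hdisj : ∀ i j, i ≠ j → Disjoint (Vs i) (Vs j)) (hcover : (⋃ i, Vs i) = {v}ᶜ)
    (g : ∀ i, SimpleGraph ↥(Vs i ∪ {v})) :
    (glue v Vs g).degree v = ∑ i, (g i).degree ⟨v, Or.inr rfl⟩ := by
  have hnb : (glue v Vs g).neighborFinset v =
      Finset.univ.biUnion
        (fun i => ((g i).neighborFinset ⟨v, Or.inr rfl⟩).image Subtype.val) := by
    ext b
    simp only [SimpleGraph.mem_neighborFinset, Finset.mem_biUnion, Finset.mem_univ, true_and,
      Finset.mem_image]
    constructor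
    · rintro ⟨j, hvj, hbj, hadj⟩
      refine ⟨j, ⟨b, hbj⟩, ?_, rfl⟩
      convert hadj
    · rintro ⟨j, b', hb', rfl⟩
      exact glue_hom_adj (x := ⟨v, Or.inr rfl⟩) hb'
  rw [SimpleGraph.degree, hnb, Finset.card_biUnion]
  · simp_rw [Finset.card_image_of_injective _ Subtype.val_injective]
    rfl
  · intro i _ j _ hij
    refine Finset.disjoint_left.2 ?_
    rintro b hbi hbj
    obtain ⟨b', hb', rfl⟩ := Finset.mem_image.1 hbi
    obtain ⟨b'', hb'', he⟩ := Finset.mem_image.1 hbj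
    rw [SimpleGraph.mem_neighborFinset] at hb' hb''
    have h1 : b'.val = v := eq_v_of_mem_two hdisj hij b'.2 (he ▸ b''.2)
    exact (g i).ne_of_adj hb' (Subtype.ext h1.symm) |>.elim

open scoped Classical in
lemma degree_v_pos [Fintype V] {i : Fin k} {g : SimpleGraph ↥(Vs i ∪ {v})}
    (hconn : g.Connected) (hne : (Vs i).Nonempty) (hcover : (⋃ i, Vs i) = {v}ᶜ) :
    1 ≤ g.degree ⟨v, Or.inr rfl⟩ := by
  obtain ⟨a, ha⟩ := hne
  have hav : (⟨a, Or.inl ha⟩ : ↥(Vs i ∪ {v})) ≠ ⟨v, Or.inr rfl⟩ := by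
    intro e
    have ha' : a = v := congrArg Subtype.val e
    rw [ha'] at ha
    exact v_not_mem hcover i ha
  obtain ⟨p⟩ := hconn.preconnected ⟨v, Or.inr rfl⟩ ⟨a, Or.inl ha⟩
  cases p with
  | nil => exact absurd rfl hav.symm
  | cons h q =>
    rw [Nat.succ_le_iff, SimpleGraph.degree_pos_iff_exists_adj]
    exact ⟨_, h⟩

end

open scoped Classical in
lemma term_eq [Fintype V] [DecidableEq V]
    (hdisj : ∀ i j, i ≠ j → Disjoint (Vs i) (Vs j)) (hcover : (⋃ i, Vs i) = {v}ᶜ)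
    (hne : ∀ i, (Vs i).Nonempty)
    {g : ∀ i, SimpleGraph ↥(Vs i ∪ {v})} (hconn : ∀ i, (g i).Connected)
    (w : Sym2 V → ℝ) :
    (MvPolynomial.C (∏ e ∈ (glue v Vs g).edgeFinset, w e) : MvPolynomial V ℝ) *
        ∏ x, MvPolynomial.X x ^ ((glue v Vs g).degree x - 1) =
      MvPolynomial.X v ^ (k - 1) *
        ∏ i, (MvPolynomial.C (∏ e ∈ (g i).edgeFinset, w (e.map Subtype.val)) *
          ∏ u, MvPolynomial.X u.val ^ ((g i).degree u - 1)) := by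
  -- C part
  have hC : (∏ e ∈ (glue v Vs g).edgeFinset, w e)
      = ∏ i, ∏ e ∈ (g i).edgeFinset, w (e.map Subtype.val) := by
    rw [glue_edgeFinset hdisj g, Finset.prod_biUnion (glue_edge_disjoint hdisj g)]
    refine Finset.prod_congr rfl fun i _ => ?_
    rw [Finset.prod_image fun e _ e' _ h => Sym2.map.injective Subtype.val_injective h]
  -- erase v = biUnion of parts
  have herase : (Finset.univ.erase v) = Finset.univ.biUnion (fun i => (Vs i).toFinset) := by
    ext x
    simp only [Finset.mem_erase, Finset.mem_univ, and_true, Finset.mem_biUnion, true_and,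
      Set.mem_toFinset]
    constructor
    · exact fun hx => mem_part hcover hx
    · rintro ⟨i, hx⟩ rfl
      exact v_not_mem hcover i hx
  have hdisjF : ∀ i ∈ (Finset.univ : Finset (Fin k)), ∀ j ∈ Finset.univ, i ≠ j →
      Disjoint (Vs i).toFinset (Vs j).toFinset := by
    intro i _ j _ hij
    rw [Set.disjoint_toFinset]
    exact hdisj i j hij
  -- X part split
  have hsplit : (∏ x, MvPolynomial.X (R := ℝ) x ^ ((glue v Vs g).degree x - 1))
      = MvPolynomial.X v ^ ((glue v Vs g).degree v - 1) *
          ∏ i, ∏ x ∈ (Vs i).toFinset, MvPolynomial.X x ^ ((glue v Vs g).degree x - 1) := by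
    rw [← Finset.mul_prod_erase Finset.univ _ (Finset.mem_univ v), herase,
      Finset.prod_biUnion hdisjF]
  -- per part subtype product
  have hpart : ∀ i : Fin k,
      (∏ u : ↥(Vs i ∪ {v}), MvPolynomial.X (R := ℝ) u.val ^ ((g i).degree u - 1))
        = MvPolynomial.X v ^ ((g i).degree ⟨v, Or.inr rfl⟩ - 1) *
            ∏ x ∈ (Vs i).toFinset, MvPolynomial.X x ^ ((glue v Vs g).degree x - 1) := by
    intro i
    rw [← Finset.mul_prod_erase Finset.univ _ (Finset.mem_univ (⟨v, Or.inr rfl⟩ : ↥(Vs i ∪ {v})))]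
    congr 1
    refine Finset.prod_bij (fun u _ => u.val) ?_ ?_ ?_ ?_
    · rintro ⟨u, hu⟩ hmem
      rw [Finset.mem_erase] at hmem
      have huv : u ≠ v := fun e => hmem.1 (Subtype.ext e)
      rw [Set.mem_toFinset]
      exact hu.resolve_right huv
    · exact fun a _ b _ h => Subtype.ext h
    · intro x hx
      rw [Set.mem_toFinset] at hx
      refine ⟨⟨x, Or.inl hx⟩, Finset.mem_erase.2 ⟨?_, Finset.mem_univ _⟩, rfl⟩
      intro e
      have hx' : x = v := congrArg Subtype.val e
      rw [hx'] at hx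
      exact v_not_mem hcover i hx
    · rintro ⟨u, hu⟩ hmem
      rw [Finset.mem_erase] at hmem
      have huv : u ≠ v := fun e => hmem.1 (Subtype.ext e)
      have hu' : u ∈ Vs i := hu.resolve_right huv
      have h2 : (glue v Vs g).degree u = (g i).degree ⟨u, Or.inl hu'⟩ :=
        glue_degree_of_mem hdisj hcover hu'
      exact congrArg (fun n => MvPolynomial.X (R := ℝ) u ^ (n - 1)) h2.symm
  -- exponent arithmetic
  have hdeg : (glue v Vs g).degree v = ∑ i, (g i).degree ⟨v, Or.inr rfl⟩ :=
    glue_degree_v hdisj hcover g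
  have hpos : ∀ i, 1 ≤ (g i).degree ⟨v, Or.inr rfl⟩ :=
    fun i => degree_v_pos (hconn i) (hne i) hcover
  have hexp : (glue v Vs g).degree v - 1
      = (k - 1) + ∑ i, ((g i).degree ⟨v, Or.inr rfl⟩ - 1) := by
    have hsum : ∑ i, (g i).degree ⟨v, Or.inr rfl⟩
        = (∑ i, ((g i).degree ⟨v, Or.inr rfl⟩ - 1)) + ∑ _i : Fin k, 1 := by
      rw [← Finset.sum_add_distrib]
      exact Finset.sum_congr rfl fun i _ => (Nat.succ_pred_eq_of_pos (hpos i)).symm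
    simp only [Finset.sum_const, Finset.card_univ, Fintype.card_fin, smul_eq_mul,
      mul_one] at hsum
    rcases Nat.eq_zero_or_pos k with rfl | hk
    · simp [hdeg]
    · omega
  -- assemble
  rw [hC, hsplit, hexp]
  simp only [hpart]
  rw [Finset.prod_mul_distrib, Finset.prod_mul_distrib, Finset.prod_pow_eq_pow_sum, map_prod,
    pow_add]
  ring


end CutAux

open scoped Classical in
/-- Cut-vertex factorization of the weighted vertex spanning-tree polynomial:
if removing the vertex `v` from the connected weighted graph `G` leaves the
connected components `V₁, …, V_k` (here `Vs 0, …, Vs (k-1)`), and `Gᵢ` is the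
subgraph induced on `Vᵢ ∪ {v}`, then
`P_{G,w} = x_v^{k−1} · Π_i P_{Gᵢ,w}`. -/
theorem stmt_11 {V : Type*} [Fintype V] [DecidableEq V] (G : SimpleGraph V)
    (hG : G.Connected) (w : Sym2 V → ℝ) (v : V) (k : ℕ) (Vs : Fin k → Set V)
    (hne : ∀ i, (Vs i).Nonempty)
    (hdisj : ∀ i j, i ≠ j → Disjoint (Vs i) (Vs j))
    (hcover : (⋃ i, Vs i) = {v}ᶜ)
    (hconn : ∀ i, (G.induce (Vs i)).Connected)
    (hsep : ∀ i j, i ≠ j → ∀ a ∈ Vs i, ∀ b ∈ Vs j, ¬ G.Adj a b) :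
    treePoly G w =
      MvPolynomial.X v ^ (k - 1) *
        ∏ i, MvPolynomial.rename (Subtype.val : ↥(Vs i ∪ {v}) → V)
          (treePoly (G.induce (Vs i ∪ {v}))
            (fun e => w (e.map Subtype.val))) := by
  classical
  -- rewrite each renamed treePoly
  have hren : ∀ i : Fin k,
      MvPolynomial.rename (Subtype.val : ↥(Vs i ∪ {v}) → V)
          (treePoly (G.induce (Vs i ∪ {v})) (fun e => w (e.map Subtype.val)))
        = ∑ T ∈ Finset.univ.filter
            (fun T : SimpleGraph ↥(Vs i ∪ {v}) => T ≤ G.induce (Vs i ∪ {v}) ∧ T.IsTree),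
            MvPolynomial.C (∏ e ∈ T.edgeFinset, w (e.map Subtype.val)) *
              ∏ u, MvPolynomial.X u.val ^ (T.degree u - 1) := by
    intro i
    rw [treePoly, map_sum]
    refine Finset.sum_congr rfl fun T _ => ?_
    simp only [map_mul, MvPolynomial.rename_C, map_prod, map_pow, MvPolynomial.rename_X]
  simp only [hren]
  rw [Finset.prod_univ_sum, Finset.mul_sum, treePoly]
  have hGpart : ∀ (T : SimpleGraph V), T ≤ G → CutAux.PartEdges v Vs T :=
    fun T hT => CutAux.partEdges_of_le hcover hsep hT
  refine Finset.sum_nbij' (fun T => fun i => T.induce (Vs i ∪ {v}))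
    (CutAux.glue v Vs) ?hi ?hj ?hli ?hri ?hval
  case hi =>
    intro T hT
    rw [Finset.mem_filter] at hT
    obtain ⟨-, hle, htree⟩ := hT
    rw [Fintype.mem_piFinset]
    intro i
    rw [Finset.mem_filter]
    refine ⟨Finset.mem_univ _, fun x y h => hle h, ?_, ?_⟩
    · exact CutAux.induce_connected hdisj hcover (hGpart T hle) htree.isConnected i
    · exact CutAux.induce_acyclic htree.IsAcyclic _
  case hj =>
    intro g hg
    rw [Fintype.mem_piFinset] at hg
    have hg' : ∀ i, g i ≤ G.induce (Vs i ∪ {v}) ∧ (g i).IsTree := by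
      intro i
      have := hg i
      rwa [Finset.mem_filter, and_iff_right (Finset.mem_univ _)] at this
    rw [Finset.mem_filter]
    refine ⟨Finset.mem_univ _, CutAux.glue_le (fun i => (hg' i).1), ?_, ?_⟩
    · exact CutAux.glue_connected hdisj hcover (fun i => (hg' i).2.isConnected)
    · exact CutAux.glue_acyclic hdisj hcover (fun i => (hg' i).2.IsAcyclic)
  case hli =>
    intro T hT
    rw [Finset.mem_filter] at hT
    exact CutAux.induce_glue hcover (hGpart T hT.2.1)
  case hri =>
    intro g hg
    funext i
    exact CutAux.glue_induce hdisj g i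
  case hval =>
    intro T hT
    rw [Finset.mem_filter] at hT
    obtain ⟨-, hle, htree⟩ := hT
    have hpe := hGpart T hle
    have hco : ∀ i, (T.induce (Vs i ∪ {v})).Connected :=
      fun i => CutAux.induce_connected hdisj hcover hpe htree.isConnected i
    conv_lhs => rw [← CutAux.induce_glue hcover hpe]
    exact CutAux.term_eq hdisj hcover hne hco w
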